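/- arXiv:2306.07733 — 2 statements merged into one kernel-verified Lean document; each statement's English description precedes it below -/
import Mathlib

section
/- The family p_m(n) (m, n ∈ ℕ) satisfies p_m(0) = 1, p_m(1) = C_m, and the recursion p_m(n−1)·p_{m+2}(n−1) − p_{m+1}(n−1)^2 = p_m(n)·p_{m+2}(n−2) for all m ∈ ℕ and n ≥ 2; moreover it is the unique such family: if q : ℕ × ℕ → ℚ satisfies q(m,0) = 1 and q(m,1) = C_m for all m ∈ ℕ, and q(m,n−1)·q(m+2,n−1) − q(m+1,n−1)^2 = q(m,n)·q(m+2,n−2) for all m ∈ ℕ and all n ≥ 2, then q(m,n) = p_m(n) for all m, n ∈ ℕ. -/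
open Finset

def pRat (m : ℕ) (x : ℚ) : ℚ :=
  ∏ i ∈ Finset.Icc 1 (m - 1), ∏ j ∈ Finset.Icc i (m - 1),
    (2 * x + (i : ℚ) + (j : ℚ)) / ((i : ℚ) + (j : ℚ))

def S (c : ℚ) (k : ℕ) : ℚ := ∏ i ∈ Finset.Icc 1 k, (c + (i : ℚ))

lemma S_zero (c : ℚ) : S c 0 = 1 := by simp [S]

lemma S_succ (c : ℚ) (k : ℕ) : S c (k+1) = S c k * (c + (k+1 : ℚ)) := by
  rw [S, S, Finset.prod_Icc_succ_top (by omega)]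
  push_cast; ring_nf

lemma S_pop (c : ℚ) (k : ℕ) : S c (k+1) = (c+1) * S (c+1) k := by
  induction k with
  | zero => simp [S_succ, S_zero]
  | succ k ih =>
    rw [S_succ, ih, S_succ]; push_cast; ring

lemma S_shift (c : ℚ) (k : ℕ) : S (c+1) k * (c+1) = S c k * (c + k + 1) := by
  have h := S_pop c k
  rw [S_succ] at h
  rw [mul_comm, ← h]; ring

lemma S_pos (c : ℚ) (hc : 0 ≤ c) (k : ℕ) : 0 < S c k := by
  apply Finset.prod_pos
  intro i hi
  have : (1:ℚ) ≤ i := by exact_mod_cast (Finset.mem_Icc.mp hi).1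
  linarith

lemma S_ne (c : ℚ) (hc : 0 ≤ c) (k : ℕ) : S c k ≠ 0 := ne_of_gt (S_pos c hc k)

lemma pRat_pos (m : ℕ) (x : ℚ) (hx : 0 ≤ x) : 0 < pRat m x := by
  apply Finset.prod_pos; intro i hi
  apply Finset.prod_pos; intro j hj
  have h1 : (1:ℚ) ≤ i := by exact_mod_cast (Finset.mem_Icc.mp hi).1
  have h2 : (i:ℚ) ≤ j := by exact_mod_cast (Finset.mem_Icc.mp hj).1
  apply div_pos <;> linarith

lemma pRat_zero (m : ℕ) : pRat m 0 = 1 := by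
  apply Finset.prod_eq_one; intro i hi
  apply Finset.prod_eq_one; intro j hj
  have h1 : (1:ℚ) ≤ i := by exact_mod_cast (Finset.mem_Icc.mp hi).1
  have h2 : (i:ℚ) ≤ j := by exact_mod_cast (Finset.mem_Icc.mp hj).1
  rw [mul_zero, zero_add]
  exact div_self (by linarith)

lemma pRat_succ (m : ℕ) (x : ℚ) :
    pRat (m+1) x * S (m : ℚ) m = pRat m x * S (2*x + m) m := by
  rcases m with _ | k
  · simp [pRat, S]
  · -- m = k+1
    have hsplit : pRat (k+2) x
        = pRat (k+1) x * ∏ i ∈ Finset.Icc 1 (k+1),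
            (2*x + (i:ℚ) + ((k:ℚ)+1)) / ((i:ℚ) + ((k:ℚ)+1)) := by
      unfold pRat
      simp only [show k+2-1 = k+1 from rfl, show k+1-1 = k from rfl]
      have hinner : ∀ i ∈ Finset.Icc 1 (k+1),
          (∏ j ∈ Finset.Icc i (k+1), (2*x + (i:ℚ) + (j:ℚ)) / ((i:ℚ) + (j:ℚ)))
          = (∏ j ∈ Finset.Icc i k, (2*x + (i:ℚ) + (j:ℚ)) / ((i:ℚ) + (j:ℚ)))
            * ((2*x + (i:ℚ) + ((k:ℚ)+1)) / ((i:ℚ) + ((k:ℚ)+1))) := by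
        intro i hi
        rw [Finset.prod_Icc_succ_top (Finset.mem_Icc.mp hi).2]
        push_cast; ring_nf
      rw [Finset.prod_congr rfl hinner, Finset.prod_mul_distrib]
      congr 1
      rw [Finset.prod_Icc_succ_top (by omega : 1 ≤ k+1)]
      simp
    rw [hsplit]
    have h2 : (∏ i ∈ Finset.Icc 1 (k+1), (2*x + (i:ℚ) + ((k:ℚ)+1)) / ((i:ℚ) + ((k:ℚ)+1)))
        * S ((k:ℚ)+1) (k+1) = S (2*x + ((k:ℚ)+1)) (k+1) := by
      rw [S, S, ← Finset.prod_mul_distrib]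
      apply Finset.prod_congr rfl
      intro i hi
      have h1 : (1:ℚ) ≤ i := by exact_mod_cast (Finset.mem_Icc.mp hi).1
      have hne : (i:ℚ) + ((k:ℚ)+1) ≠ 0 := by positivity
      rw [add_comm ((k:ℚ)+1) (i:ℚ)] at *
      field_simp
      ring
    push_cast
    calc pRat (k+1) x * (∏ i ∈ Finset.Icc 1 (k+1),
            (2*x + (i:ℚ) + ((k:ℚ)+1)) / ((i:ℚ) + ((k:ℚ)+1))) * S ((k:ℚ)+1) (k+1)
        = pRat (k+1) x * ((∏ i ∈ Finset.Icc 1 (k+1),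
            (2*x + (i:ℚ) + ((k:ℚ)+1)) / ((i:ℚ) + ((k:ℚ)+1))) * S ((k:ℚ)+1) (k+1)) := by ring
      _ = pRat (k+1) x * S (2*x + ((k:ℚ)+1)) (k+1) := by rw [h2]


lemma pRat_shift (k : ℕ) (x : ℚ) (hx : 0 ≤ x) :
    pRat (k+1) (x+1) * S (2*x+1) k = pRat (k+1) x * S (2*x+(k:ℚ)+2) k := by
  induction k with
  | zero => simp [pRat, S]
  | succ k ih =>
    -- multiply-through strategy: cancel S (k+1) (k+1) and S (2x+k+3) (k+1)
    have hd : S ((k:ℚ)+1) (k+1) ≠ 0 := S_ne _ (by positivity) _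
    have ha : S (2*x+(k:ℚ)+3) (k+1) ≠ 0 := S_ne _ (by positivity) _
    apply mul_right_cancel₀ hd
    -- use pRat_succ at x+1 and x, with m = k+1
    have e1 := pRat_succ (k+1) (x+1)
    have e2 := pRat_succ (k+1) x
    push_cast at e1 e2 ⊢
    -- e1 : pRat (k+2) (x+1) * S (k+1) (k+1) = pRat (k+1) (x+1) * S (2(x+1)+(k+1)) (k+1)
    have h1 : 2*(x+1) + ((k:ℚ)+1) = 2*x+(k:ℚ)+3 := by ring
    have h2 : 2*x + ((k:ℚ)+1) = 2*x+(k:ℚ)+1 := by ring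
    rw [h1] at e1
    rw [h2] at e2
    have key : pRat (k+1) (x+1) * S (2*x+1) (k+1) * S (2*x+(k:ℚ)+3) (k+1)
        = pRat (k+1) x * S (2*x+(k:ℚ)+1) (k+1) * S (2*x+(k:ℚ)+3) (k+1) := by
      have hs1 : S (2*x+1) (k+1) = S (2*x+1) k * (2*x+1+((k:ℚ)+1)) := by
        rw [S_succ]
      have hs2 : S (2*x+(k:ℚ)+1) (k+1) = (2*x+(k:ℚ)+2) * S (2*x+(k:ℚ)+2) k := by
        have := S_pop (2*x+(k:ℚ)+1) k
        rw [this]; ring_nf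
      rw [hs1, hs2]
      calc pRat (k+1) (x+1) * (S (2*x+1) k * (2*x+1+((k:ℚ)+1))) * S (2*x+(k:ℚ)+3) (k+1)
          = (pRat (k+1) (x+1) * S (2*x+1) k) * (2*x+(k:ℚ)+2) * S (2*x+(k:ℚ)+3) (k+1) := by ring
        _ = (pRat (k+1) x * S (2*x+(k:ℚ)+2) k) * (2*x+(k:ℚ)+2) * S (2*x+(k:ℚ)+3) (k+1) := by rw [ih]
        _ = pRat (k+1) x * ((2*x+(k:ℚ)+2) * S (2*x+(k:ℚ)+2) k) * S (2*x+(k:ℚ)+3) (k+1) := by ring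
    -- now combine: goal after cancel hd:
    -- pRat (k+2) (x+1) * S (2x+1) (k+1) * S(k+1)(k+1) = pRat (k+2) x * S (2x+k+3) (k+1) * S(k+1)(k+1)
    apply mul_right_cancel₀ ha
    calc pRat (k+1+1) (x+1) * S (2*x+1) (k+1) * S ((k:ℚ)+1) (k+1) * S (2*x+(k:ℚ)+3) (k+1)
        = (pRat (k+1+1) (x+1) * S ((k:ℚ)+1) (k+1)) * (S (2*x+1) (k+1) * S (2*x+(k:ℚ)+3) (k+1)) := by ring
      _ = (pRat (k+1) (x+1) * S (2*x+(k:ℚ)+3) (k+1)) * (S (2*x+1) (k+1) * S (2*x+(k:ℚ)+3) (k+1)) := by rw [e1]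
      _ = (pRat (k+1) (x+1) * S (2*x+1) (k+1) * S (2*x+(k:ℚ)+3) (k+1)) * S (2*x+(k:ℚ)+3) (k+1) := by ring
      _ = (pRat (k+1) x * S (2*x+(k:ℚ)+1) (k+1) * S (2*x+(k:ℚ)+3) (k+1)) * S (2*x+(k:ℚ)+3) (k+1) := by rw [key]
      _ = (pRat (k+1) x * S (2*x+(k:ℚ)+1) (k+1)) * (S (2*x+(k:ℚ)+3) (k+1) * S (2*x+(k:ℚ)+3) (k+1)) := by ring
      _ = (pRat (k+1+1) x * S ((k:ℚ)+1) (k+1)) * (S (2*x+(k:ℚ)+3) (k+1) * S (2*x+(k:ℚ)+3) (k+1)) := by rw [← e2]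
      _ = pRat (k+1+1) x * S (2*x+((k:ℚ)+1)+2) (k+1) * S ((k:ℚ)+1) (k+1) * S (2*x+(k:ℚ)+3) (k+1) := by
            rw [show 2*x+((k:ℚ)+1)+2 = 2*x+(k:ℚ)+3 by ring]; ring

lemma pRat_one : ∀ m : ℕ, pRat m 1 = (catalan m : ℚ) := by
  intro m
  induction m with
  | zero => simp [pRat]
  | succ m ih =>
    have e := pRat_succ m 1
    rw [ih, show 2*1+(m:ℚ) = (m:ℚ)+1+1 by ring] at e
    have hm1 : ((m:ℚ)+1) ≠ 0 := by positivity
    have hm2 : ((m:ℚ)+2) ≠ 0 := by positivity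
    have hSne : S (m:ℚ) m ≠ 0 := S_ne _ (by positivity) _
    have hs1 := S_shift (m:ℚ) m
    have hs2 := S_shift ((m:ℚ)+1) m
    have hcat : ((m:ℚ)+2) * (catalan (m+1) : ℚ) * ((m:ℚ)+1)
        = 2 * (2*(m:ℚ)+1) * ((m:ℚ)+1) * (catalan m : ℚ) := by
      have h1 : ((m+1:ℕ) + 1) * catalan (m+1) = (m+1).centralBinom :=
        succ_mul_catalan_eq_centralBinom (m+1)
      have h2 : (m + 1) * catalan m = m.centralBinom :=
        succ_mul_catalan_eq_centralBinom m
      have h3 : (m + 1) * Nat.centralBinom (m+1) = 2 * (2*m+1) * Nat.centralBinom m :=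
        Nat.succ_mul_centralBinom_succ m
      have h1' : ((m:ℚ)+2) * (catalan (m+1) : ℚ) = ((m+1).centralBinom : ℚ) := by
        exact_mod_cast congrArg (Nat.cast : ℕ → ℚ) h1
      have h2' : ((m:ℚ)+1) * (catalan m : ℚ) = (m.centralBinom : ℚ) := by
        exact_mod_cast congrArg (Nat.cast : ℕ → ℚ) h2
      have h3' : ((m:ℚ)+1) * ((m+1).centralBinom : ℚ)
          = 2 * (2*(m:ℚ)+1) * (m.centralBinom : ℚ) := by
        exact_mod_cast congrArg (Nat.cast : ℕ → ℚ) h3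
      linear_combination ((m:ℚ)+1)*h1' + h3' - (2*(2*(m:ℚ)+1))*h2' 
    apply mul_right_cancel₀ hSne
    apply mul_right_cancel₀ hm1
    apply mul_right_cancel₀ hm1
    apply mul_right_cancel₀ hm2
    linear_combination (((m:ℚ)+1)^2*((m:ℚ)+2)) * e
      + ((catalan m : ℚ)*((m:ℚ)+1)^2) * hs2
      + ((catalan m : ℚ)*(2*(m:ℚ)+2)*((m:ℚ)+1)) * hs1
      - (S (m:ℚ) m * ((m:ℚ)+1)) * hcat

lemma pRat_two (x : ℚ) : pRat 2 x = x + 1 := by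
  simp [pRat, Finset.Icc_self]
  ring

lemma pRat_le_one (m : ℕ) (hm : m ≤ 1) (x : ℚ) : pRat m x = 1 := by
  interval_cases m <;> simp [pRat]

lemma pRat_rec (m : ℕ) (X : ℚ) (hX : 1 ≤ X) :
    pRat m X * pRat (m+2) X - pRat (m+1) X ^ 2 = pRat m (X+1) * pRat (m+2) (X-1) := by
  rcases m with _ | k
  · rw [pRat_le_one 0 (by norm_num), pRat_le_one 1 (by norm_num), pRat_le_one 0 (by norm_num),
      pRat_two, pRat_two]
    ring
  · have hX0 : (0:ℚ) ≤ X := by linarith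
    have hX1 : (0:ℚ) ≤ X - 1 := by linarith
    have e1 := pRat_succ (k+1) X
    have e2 := pRat_succ (k+2) X
    have e3 := pRat_shift k X hX0
    have e4 := pRat_shift (k+2) (X-1) hX1
    push_cast at e1 e2 e3 e4
    rw [show X-1+1 = X by ring] at e4
    rw [show 2*(X-1)+1 = 2*X-1 by ring] at e4
    rw [show 2*(X-1)+((k:ℚ)+2)+2 = 2*X+(k:ℚ)+2 by ring] at e4
    rw [show 2*X+((k:ℚ)+1) = 2*X+(k:ℚ)+1 by ring] at e1
    rw [show 2*X+((k:ℚ)+2) = 2*X+(k:ℚ)+2 by ring] at e2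
    -- atoms
    set P := pRat (k+1) X with hP_def
    set Q1 := pRat (k+2) X with hQ1_def
    set Q2 := pRat (k+3) X with hQ2_def
    set T1 := pRat (k+1) (X+1) with hT1_def
    set T2 := pRat (k+3) (X-1) with hT2_def
    set d1 := S ((k:ℚ)+1) (k+1) with hd1_def
    set d2 := S ((k:ℚ)+2) (k+2) with hd2_def
    set a1 := S (2*X+(k:ℚ)+1) (k+1) with ha1_def
    set a2 := S (2*X+(k:ℚ)+2) (k+2) with ha2_def
    set b1 := S (2*X+1) k with hb1_def
    set b2 := S (2*X+(k:ℚ)+2) k with hb2_def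
    set c1 := S (2*X-1) (k+2) with hc1_def
    -- nonvanishing
    have hPne : P ≠ 0 := ne_of_gt (pRat_pos _ _ hX0)
    have hd1ne : d1 ≠ 0 := S_ne _ (by positivity) _
    have hd2ne : d2 ≠ 0 := S_ne _ (by positivity) _
    have ha1ne : a1 ≠ 0 := S_ne _ (by positivity) _
    have ha2ne : a2 ≠ 0 := S_ne _ (by positivity) _
    have hb1ne : b1 ≠ 0 := S_ne _ (by positivity) _
    have hb2ne : b2 ≠ 0 := S_ne _ (by positivity) _
    have hc1ne : c1 ≠ 0 := S_ne _ (by linarith) _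
    -- relations among the S-atoms
    have R1 : a2 * (2*X+(k:ℚ)+2) = a1 * ((2*X+2*(k:ℚ)+3) * (2*X+2*(k:ℚ)+4)) := by
      have s1 := S_shift (2*X+(k:ℚ)+1) (k+1)
      have s2 := S_succ (2*X+(k:ℚ)+2) (k+1)
      push_cast at s1 s2
      rw [show 2*X+(k:ℚ)+1+1 = 2*X+(k:ℚ)+2 by ring] at s1
      rw [ha2_def, ha1_def]
      rw [s2]
      linear_combination (2*X+(k:ℚ)+2+((k:ℚ)+2)) * s1
    have R2 : d2 * ((k:ℚ)+2) = d1 * ((2*(k:ℚ)+3) * (2*(k:ℚ)+4)) := by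
      have s1 := S_shift ((k:ℚ)+1) (k+1)
      have s2 := S_succ ((k:ℚ)+2) (k+1)
      push_cast at s1 s2
      rw [show (k:ℚ)+1+1 = (k:ℚ)+2 by ring] at s1
      rw [hd2_def, hd1_def]
      rw [s2]
      linear_combination ((k:ℚ)+2+((k:ℚ)+2)) * s1
    have R3 : c1 = 2*X*(2*X+1) * b1 := by
      have p1 := S_pop (2*X-1) (k+1)
      have p2 := S_pop (2*X) k
      push_cast at p1 p2
      rw [show 2*X-1+1 = 2*X by ring] at p1
      rw [show 2*X+1 = 2*X+1 by ring] at p2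
      rw [hc1_def, hb1_def, p1, p2]
      ring
    have R4 : a2 = b2 * ((2*X+2*(k:ℚ)+3) * (2*X+2*(k:ℚ)+4)) := by
      have s1 := S_succ (2*X+(k:ℚ)+2) k
      have s2 := S_succ (2*X+(k:ℚ)+2) (k+1)
      push_cast at s1 s2
      rw [ha2_def, s2, s1, hb2_def]
      ring
    -- express higher pRat values
    have hQ1 : Q1 = P * a1 / d1 := by rw [eq_div_iff hd1ne]; linear_combination e1
    have hQ2 : Q2 = Q1 * a2 / d2 := by rw [eq_div_iff hd2ne]; linear_combination e2
    have hT1 : T1 = P * b2 / b1 := by rw [eq_div_iff hb1ne]; linear_combination e3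
    have hT2 : T2 = Q2 * c1 / a2 := by rw [eq_div_iff ha2ne]; linear_combination -e4
    have ha1' : a1 = a2 * (2*X+(k:ℚ)+2) / ((2*X+2*(k:ℚ)+3) * (2*X+2*(k:ℚ)+4)) := by
      rw [eq_div_iff (by positivity)]; linear_combination -R1
    have hd2' : d2 = d1 * ((2*(k:ℚ)+3) * (2*(k:ℚ)+4)) / ((k:ℚ)+2) := by
      rw [eq_div_iff (by positivity)]; linear_combination R2
    rw [hT1, hT2, hQ2, hQ1, ha1', hd2', R3, R4]
    have h1 : (2*X+2*(k:ℚ)+3) ≠ 0 := by positivity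
    have h2 : (2*X+2*(k:ℚ)+4) ≠ 0 := by positivity
    have h3 : ((k:ℚ)+2) ≠ 0 := by positivity
    field_simp
    ring

lemma pRat_uniq (q : ℕ → ℕ → ℚ)
    (h0 : ∀ m : ℕ, q m 0 = 1)
    (h1 : ∀ m : ℕ, q m 1 = (catalan m : ℚ))
    (hrec : ∀ m n : ℕ, 2 ≤ n →
      q m (n - 1) * q (m + 2) (n - 1) - (q (m + 1) (n - 1)) ^ 2 = q m n * q (m + 2) (n - 2)) :
    ∀ n m : ℕ, q m n = pRat m (n : ℚ) := by
  intro n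
  induction n using Nat.strong_induction_on with
  | _ n ih =>
    match n with
    | 0 => intro m; rw [h0 m, Nat.cast_zero, pRat_zero]
    | 1 => intro m; rw [h1 m, Nat.cast_one, pRat_one]
    | (n+2) =>
      intro m
      have e := hrec m (n+2) (by omega)
      have hn1 : n+2-1 = n+1 := by omega
      have hn2 : n+2-2 = n := by omega
      rw [hn1, hn2] at e
      rw [ih (n+1) (by omega) m, ih (n+1) (by omega) (m+2), ih (n+1) (by omega) (m+1),
        ih n (by omega) (m+2)] at e
      have key := pRat_rec m ((n:ℚ)+1) (by
        have : (0:ℚ) ≤ (n:ℚ) := Nat.cast_nonneg n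
        linarith)
      rw [show (n:ℚ)+1+1 = (n:ℚ)+2 by ring, show (n:ℚ)+1-1 = (n:ℚ) by ring] at key
      push_cast at e ⊢
      have hne : pRat (m+2) ((n:ℚ)) ≠ 0 := ne_of_gt (pRat_pos _ _ (Nat.cast_nonneg n))
      apply mul_right_cancel₀ hne
      linear_combination key - e

theorem stmt6 :
    (∀ m : ℕ, pRat m 0 = 1) ∧
    (∀ m : ℕ, pRat m 1 = (catalan m : ℚ)) ∧
    (∀ m n : ℕ, 2 ≤ n →
      pRat m ((n : ℚ) - 1) * pRat (m + 2) ((n : ℚ) - 1) - (pRat (m + 1) ((n : ℚ) - 1)) ^ 2 =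
        pRat m (n : ℚ) * pRat (m + 2) ((n : ℚ) - 2)) ∧
    (∀ q : ℕ → ℕ → ℚ,
      (∀ m : ℕ, q m 0 = 1) →
      (∀ m : ℕ, q m 1 = (catalan m : ℚ)) →
      (∀ m n : ℕ, 2 ≤ n →
        q m (n - 1) * q (m + 2) (n - 1) - (q (m + 1) (n - 1)) ^ 2 = q m n * q (m + 2) (n - 2)) →
      ∀ m n : ℕ, q m n = pRat m (n : ℚ)) := by
  refine ⟨pRat_zero, pRat_one, ?_, ?_⟩
  · intro m n hn
    have hcast : (2:ℚ) ≤ (n:ℚ) := by exact_mod_cast hn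
    have h := pRat_rec m ((n:ℚ)-1) (by linarith)
    rw [show (n:ℚ)-1+1 = (n:ℚ) by ring, show (n:ℚ)-1-1 = (n:ℚ)-2 by ring] at h
    exact h
  · intro q h0 h1 hrec m n
    exact pRat_uniq q h0 h1 hrec n m
end

section
/- For all m, n ∈ ℕ, the Hankel determinant of Catalan numbers satisfies det(C_{m+i+j})_{i,j=0}^{n−1} = ∏_{1 ≤ i ≤ j ≤ m−1} (2n+i+j)/(i+j) (the right-hand side being an empty product, equal to 1, for m ≤ 1). -/
open Finset
set_option maxHeartbeats 1600000


noncomputable def gq (j n : ℕ) : ℚ :=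
  ((Nat.factorial (2*n+2*j) : ℚ) * (Nat.factorial j : ℚ)) /
    ((Nat.factorial (2*n+j) : ℚ) * (Nat.factorial (2*j) : ℚ))

noncomputable def Fq (M n : ℕ) : ℚ := ∏ j ∈ Finset.Icc 1 M, gq j n

lemma factq_pos (k : ℕ) : (0:ℚ) < (Nat.factorial k : ℚ) := by
  exact_mod_cast Nat.factorial_pos k

lemma factq_succ (a : ℕ) : ((Nat.factorial (a+1) : ℚ)) = ((a:ℚ)+1) * (Nat.factorial a : ℚ) := by
  push_cast [Nat.factorial_succ]; ring

lemma R1 (m n : ℕ) : gq (m+1) (n+1) * (2*(2*(m:ℚ)+1)) = gq m (n+2) * (2*(n:ℚ)+(m:ℚ)+4) := by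
  unfold gq
  rw [show 2*(n+2)+2*m = 2*n+2*m+4 from by ring, show 2*(n+1)+2*(m+1) = 2*n+2*m+4 from by ring,
    show 2*(n+2)+m = 2*n+m+4 from by ring, show 2*(n+1)+(m+1) = 2*n+m+3 from by ring,
    show 2*(m+1) = 2*m+2 from by ring]
  simp only [factq_succ]
  push_cast
  set A := ((Nat.factorial (2*n+2*m) : ℚ)) with hA
  set B := ((Nat.factorial m : ℚ)) with hB
  set C := ((Nat.factorial (2*n+m) : ℚ)) with hC
  set D := ((Nat.factorial (2*m) : ℚ)) with hD
  have hA0 : A ≠ 0 := ne_of_gt (factq_pos _)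
  have hB0 : B ≠ 0 := ne_of_gt (factq_pos _)
  have hC0 : C ≠ 0 := ne_of_gt (factq_pos _)
  have hD0 : D ≠ 0 := ne_of_gt (factq_pos _)
  have q1 : 2*(n:ℚ)+(m:ℚ)+1 ≠ 0 := by positivity
  have q2 : 2*(n:ℚ)+(m:ℚ)+2 ≠ 0 := by positivity
  have q3 : 2*(n:ℚ)+(m:ℚ)+3 ≠ 0 := by positivity
  have q4 : 2*(n:ℚ)+(m:ℚ)+4 ≠ 0 := by positivity
  have q5 : 2*(m:ℚ)+1 ≠ 0 := by positivity
  have q6 : 2*(m:ℚ)+2 ≠ 0 := by positivity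
  field_simp
  ring

lemma R2 (m n : ℕ) : gq (m+1) (n+1) * (2*(n:ℚ)+(m:ℚ)+3) = gq (m+2) n * (2*(2*(m:ℚ)+3)) := by
  unfold gq
  rw [show 2*n+2*(m+2) = 2*n+2*m+4 from by ring, show 2*(n+1)+2*(m+1) = 2*n+2*m+4 from by ring,
    show 2*(n+1)+(m+1) = 2*n+m+3 from by ring, show 2*n+(m+2) = 2*n+m+2 from by ring,
    show 2*(m+2) = 2*m+4 from by ring, show 2*(m+1) = 2*m+2 from by ring]
  simp only [factq_succ]
  push_cast
  set A := ((Nat.factorial (2*n+2*m) : ℚ)) with hA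
  set B := ((Nat.factorial m : ℚ)) with hB
  set C := ((Nat.factorial (2*n+m) : ℚ)) with hC
  set D := ((Nat.factorial (2*m) : ℚ)) with hD
  have hA0 : A ≠ 0 := ne_of_gt (factq_pos _)
  have hB0 : B ≠ 0 := ne_of_gt (factq_pos _)
  have hC0 : C ≠ 0 := ne_of_gt (factq_pos _)
  have hD0 : D ≠ 0 := ne_of_gt (factq_pos _)
  have q1 : 2*(n:ℚ)+(m:ℚ)+1 ≠ 0 := by positivity
  have q2 : 2*(n:ℚ)+(m:ℚ)+2 ≠ 0 := by positivity
  have q3 : 2*(n:ℚ)+(m:ℚ)+3 ≠ 0 := by positivity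
  have q5 : 2*(m:ℚ)+1 ≠ 0 := by positivity
  have q6 : 2*(m:ℚ)+2 ≠ 0 := by positivity
  have q7 : 2*(m:ℚ)+3 ≠ 0 := by positivity
  have q8 : 2*(m:ℚ)+4 ≠ 0 := by positivity
  have q9 : (m:ℚ)+1 ≠ 0 := by positivity
  have q10 : (m:ℚ)+2 ≠ 0 := by positivity
  field_simp
  ring

lemma R3 (m n : ℕ) : gq (m+1) (n+1) * ((2*(n:ℚ)+(m:ℚ)+3)*(2*(m:ℚ)+1)) =
    gq m (n+1) * (((n:ℚ)+(m:ℚ)+2)*(2*(n:ℚ)+2*(m:ℚ)+3)) := by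
  unfold gq
  rw [show 2*(n+1)+2*(m+1) = 2*n+2*m+4 from by ring,
    show 2*(n+1)+2*m = 2*n+2*m+2 from by ring,
    show 2*(n+1)+(m+1) = 2*n+m+3 from by ring, show 2*(n+1)+m = 2*n+m+2 from by ring,
    show 2*(m+1) = 2*m+2 from by ring]
  simp only [factq_succ]
  push_cast
  set A := ((Nat.factorial (2*n+2*m) : ℚ)) with hA
  set B := ((Nat.factorial m : ℚ)) with hB
  set C := ((Nat.factorial (2*n+m) : ℚ)) with hC
  set D := ((Nat.factorial (2*m) : ℚ)) with hD
  have hA0 : A ≠ 0 := ne_of_gt (factq_pos _)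
  have hB0 : B ≠ 0 := ne_of_gt (factq_pos _)
  have hC0 : C ≠ 0 := ne_of_gt (factq_pos _)
  have hD0 : D ≠ 0 := ne_of_gt (factq_pos _)
  have q1 : 2*(n:ℚ)+(m:ℚ)+1 ≠ 0 := by positivity
  have q2 : 2*(n:ℚ)+(m:ℚ)+2 ≠ 0 := by positivity
  have q3 : 2*(n:ℚ)+(m:ℚ)+3 ≠ 0 := by positivity
  have q5 : 2*(m:ℚ)+1 ≠ 0 := by positivity
  have q6 : 2*(m:ℚ)+2 ≠ 0 := by positivity
  have q9 : (m:ℚ)+1 ≠ 0 := by positivity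
  field_simp
  ring

lemma R4 (m n : ℕ) : gq (m+2) (n+1) * ((2*(n:ℚ)+(m:ℚ)+4)*(2*(m:ℚ)+3)) =
    gq (m+1) (n+1) * (((n:ℚ)+(m:ℚ)+3)*(2*(n:ℚ)+2*(m:ℚ)+5)) := by
  have h := R3 (m+1) n
  push_cast at h
  rw [show m+1+1 = m+2 from rfl] at h
  linear_combination h

lemma GI1 (m n : ℕ) :
    gq m (n+2) * gq (m+2) n * ((2*(m:ℚ)+3) * (2*(n:ℚ)+(m:ℚ)+4)) =
      gq (m+1) (n+1)^2 * ((2*(m:ℚ)+1) * (2*(n:ℚ)+(m:ℚ)+3)) := by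
  linear_combination (-(gq (m+2) n)*(2*(m:ℚ)+3)) * R1 m n +
    (-(gq (m+1) (n+1))*(2*(m:ℚ)+1)) * R2 m n

lemma GI2 (m n : ℕ) :
    gq m (n+1) * gq (m+2) (n+1) *
      ((2*(m:ℚ)+3) * (2*(n:ℚ)+(m:ℚ)+4) * (((n:ℚ)+(m:ℚ)+2) * (2*(n:ℚ)+2*(m:ℚ)+3))) =
      gq (m+1) (n+1)^2 *
      ((2*(m:ℚ)+1) * (2*(n:ℚ)+(m:ℚ)+3) * (((n:ℚ)+(m:ℚ)+3) * (2*(n:ℚ)+2*(m:ℚ)+5))) := by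
  linear_combination (-(gq (m+2) (n+1)) * ((2*(n:ℚ)+(m:ℚ)+4)*(2*(m:ℚ)+3))) * R3 m n +
    ((gq (m+1) (n+1)) * ((2*(n:ℚ)+(m:ℚ)+3)*(2*(m:ℚ)+1))) * R4 m n

lemma gq_pos (j n : ℕ) : 0 < gq j n := by unfold gq; positivity

lemma Fq_pos (M n : ℕ) : 0 < Fq M n := Finset.prod_pos fun j _ => gq_pos j n

lemma Fq_succ (M n : ℕ) : Fq (M+1) n = Fq M n * gq (M+1) n := by
  unfold Fq
  rw [Finset.prod_Icc_succ_top (Nat.le_add_left 1 M)]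

lemma Fq_zero (n : ℕ) : Fq 0 n = 1 := by simp [Fq]

lemma gq_one (n : ℕ) : gq 1 n = (n:ℚ) + 1 := by
  unfold gq
  rw [show 2*n+2*1 = 2*n+2 from by ring, show 2*n+1 = 2*n+1 from rfl]
  simp only [factq_succ]
  have h1 : ((Nat.factorial (2*n) : ℚ)) ≠ 0 := ne_of_gt (factq_pos _)
  norm_num [Nat.factorial]
  field_simp
  ring

lemma gq_two (n : ℕ) : gq 2 n = ((n:ℚ)+2) * (2*(n:ℚ)+3) / 6 := by
  unfold gq
  rw [show 2*n+2*2 = 2*n+4 from by ring, show 2*n+2 = 2*n+2 from rfl]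
  simp only [factq_succ]
  have h1 : ((Nat.factorial (2*n) : ℚ)) ≠ 0 := ne_of_gt (factq_pos _)
  have q1 : 2*(n:ℚ)+1 ≠ 0 := by positivity
  norm_num [Nat.factorial]
  field_simp
  ring

lemma Fq_one (n : ℕ) : Fq 1 n = gq 1 n := by
  have h := Fq_succ 0 n
  norm_num [Fq_zero] at h
  exact h

lemma Fq_two (n : ℕ) : Fq 2 n = gq 1 n * gq 2 n := by
  have h := Fq_succ 1 n
  norm_num [Fq_one] at h
  exact h

/-- L1 : Fq M (n+2) * Fq (M+2) n * ((2M+3)(2n+M+4)) = (n+1)(2n+3) * Fq (M+1) (n+1)^2 -/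
lemma L1 (M n : ℕ) :
    Fq M (n+2) * Fq (M+2) n * ((2*(M:ℚ)+3) * (2*(n:ℚ)+(M:ℚ)+4)) =
      ((n:ℚ)+1) * (2*(n:ℚ)+3) * (Fq (M+1) (n+1))^2 := by
  induction M with
  | zero =>
    norm_num [Fq_zero, Fq_one, Fq_two, gq_one, gq_two]
    push_cast
    ring
  | succ M ih =>
    have h1 : Fq (M+1) (n+2) = Fq M (n+2) * gq (M+1) (n+2) := Fq_succ M (n+2)
    have h2 : Fq (M+1+2) n = Fq (M+2) n * gq (M+3) n := Fq_succ (M+2) n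
    have h3 : Fq (M+1+1) (n+1) = Fq (M+1) (n+1) * gq (M+2) (n+1) := Fq_succ (M+1) (n+1)
    rw [h1, h2, h3]
    have key := GI1 (M+1) n
    push_cast at key ⊢
    linear_combination (Fq M (n+2) * Fq (M+2) n) * key + (gq (M+2) (n+1))^2 * ih

lemma L2 (M n : ℕ) :
    Fq M (n+1) * Fq (M+2) (n+1) * ((2*(M:ℚ)+3) * (2*(n:ℚ)+(M:ℚ)+4)) =
      (((n:ℚ)+(M:ℚ)+3) * (2*(n:ℚ)+2*(M:ℚ)+5)) * (Fq (M+1) (n+1))^2 := by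
  induction M with
  | zero =>
    norm_num [Fq_zero, Fq_one, Fq_two, gq_one, gq_two]
    push_cast
    ring
  | succ M ih =>
    have h1 : Fq (M+1) (n+1) = Fq M (n+1) * gq (M+1) (n+1) := Fq_succ M (n+1)
    have h2 : Fq (M+3) (n+1) = Fq (M+2) (n+1) * gq (M+3) (n+1) := by
      have h := Fq_succ (M+2) (n+1); rwa [show M+2+1 = M+3 from by omega] at h
    have h3 : Fq (M+2) (n+1) = Fq (M+1) (n+1) * gq (M+2) (n+1) := by
      have h := Fq_succ (M+1) (n+1); rwa [show M+1+1 = M+2 from by omega] at h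
    rw [show M+1+2 = M+3 from by omega, show M+1+1 = M+2 from by omega, h2, h3, h1]
    rw [h3, h1] at ih
    have key := GI2 (M+1) n
    have he : ((n:ℚ)+(M:ℚ)+3) * (2*(n:ℚ)+2*(M:ℚ)+5) ≠ 0 := by positivity
    apply mul_left_cancel₀ he
    push_cast at key ⊢
    linear_combination ((Fq M (n+1))^2 * gq (M+1) (n+1) * gq (M+2) (n+1)) * key +
      ((gq (M+2) (n+1))^2 * (((n:ℚ)+(M:ℚ)+4) * (2*(n:ℚ)+2*(M:ℚ)+7))) * ih

/-- the f of the theorem -/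
noncomputable def fq (m n : ℕ) : ℚ := Fq (m-1) n

lemma KEY (m n : ℕ) :
    fq m (n+2) * fq (m+2) n + (fq (m+1) (n+1))^2 = fq m (n+1) * fq (m+2) (n+1) := by
  cases m with
  | zero =>
    show Fq 0 (n+2) * Fq 1 n + (Fq 0 (n+1))^2 = Fq 0 (n+1) * Fq 1 (n+1)
    have e1 : Fq 1 n = gq 1 n := by
      have h := Fq_succ 0 n; norm_num [Fq_zero] at h; exact h
    have e2 : Fq 1 (n+1) = gq 1 (n+1) := by
      have h := Fq_succ 0 (n+1); norm_num [Fq_zero] at h; exact h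
    rw [Fq_zero, Fq_zero, e1, e2, gq_one, gq_one]
    push_cast; ring
  | succ M =>
    show Fq M (n+2) * Fq (M+2) n + (Fq (M+1) (n+1))^2 = Fq M (n+1) * Fq (M+2) (n+1)
    have hc : ((2*(M:ℚ)+3) * (2*(n:ℚ)+(M:ℚ)+4)) ≠ 0 := by positivity
    apply mul_left_cancel₀ hc
    linear_combination L1 M n - L2 M n

lemma cat_step (K : ℕ) :
    ((K:ℚ)+3) * (catalan (K+2) : ℚ) = 2*(2*(K:ℚ)+3) * (catalan (K+1) : ℚ) := by
  have a := succ_mul_catalan_eq_centralBinom (K+1)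
  have b := Nat.succ_mul_centralBinom_succ (K+1)
  have c := succ_mul_catalan_eq_centralBinom (K+2)
  have a' : ((K:ℚ)+2) * (catalan (K+1) : ℚ) = ((K+1).centralBinom : ℚ) := by
    exact_mod_cast congrArg (Nat.cast : ℕ → ℚ) a
  have b' : ((K:ℚ)+2) * ((K+2).centralBinom : ℚ) = 2*(2*(K:ℚ)+3) * ((K+1).centralBinom : ℚ) := by
    exact_mod_cast congrArg (Nat.cast : ℕ → ℚ) b
  have c' : ((K:ℚ)+3) * (catalan (K+2) : ℚ) = ((K+2).centralBinom : ℚ) := by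
    exact_mod_cast congrArg (Nat.cast : ℕ → ℚ) c
  have h2 : ((K:ℚ)+2) ≠ 0 := by positivity
  apply mul_left_cancel₀ h2
  linear_combination ((K:ℚ)+2) * c' + b' - 2*(2*(K:ℚ)+3) * a'

lemma gq_succ_one (K : ℕ) : gq (K+1) 1 * ((K:ℚ)+3) = 2*(2*(K:ℚ)+3) := by
  unfold gq
  rw [show 2*1+2*(K+1) = 2*K+4 from by omega, show 2*1+(K+1) = K+3 from by omega,
    show 2*(K+1) = 2*K+2 from by omega]
  simp only [factq_succ]
  have h1 : ((Nat.factorial (2*K) : ℚ)) ≠ 0 := ne_of_gt (factq_pos _)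
  have h2 : ((Nat.factorial K : ℚ)) ≠ 0 := ne_of_gt (factq_pos _)
  have q1 : 2*(K:ℚ)+1 ≠ 0 := by positivity
  have q2 : (K:ℚ)+1 ≠ 0 := by positivity
  have q3 : (K:ℚ)+2 ≠ 0 := by positivity
  push_cast
  field_simp
  ring

lemma cat_fq (m : ℕ) : (catalan m : ℚ) = fq m 1 := by
  cases m with
  | zero => simp [fq, Fq_zero]
  | succ K =>
    show (catalan (K+1) : ℚ) = Fq K 1
    induction K with
    | zero => simp [Fq_zero, catalan_one]
    | succ K ih =>
      rw [Fq_succ, ← ih]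
      have h3 : ((K:ℚ)+3) ≠ 0 := by positivity
      apply mul_left_cancel₀ h3
      have := gq_succ_one K
      have hcs := cat_step K
      linear_combination hcs - (catalan (K+1) : ℚ) * this

lemma prod_lin (c j : ℕ) :
    (∏ i ∈ Finset.Icc 1 j, ((c:ℚ)+(i:ℚ))) * (Nat.factorial c : ℚ) = (Nat.factorial (c+j) : ℚ) := by
  induction j with
  | zero => simp
  | succ j ih =>
    rw [Finset.prod_Icc_succ_top (Nat.le_add_left 1 j), show c+(j+1) = (c+j)+1 from by omega,
      factq_succ, ← ih]
    push_cast
    ring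

lemma inner_prod (j n : ℕ) :
    (∏ i ∈ Finset.Icc 1 j, ((2*(n:ℚ)+(i:ℚ)+(j:ℚ))/((i:ℚ)+(j:ℚ)))) = gq j n := by
  rw [Finset.prod_div_distrib]
  have hnum : (∏ i ∈ Finset.Icc 1 j, (2*(n:ℚ)+(i:ℚ)+(j:ℚ)))
      = ∏ i ∈ Finset.Icc 1 j, (((2*n+j : ℕ):ℚ)+(i:ℚ)) := by
    apply Finset.prod_congr rfl; intro i _; push_cast; ring
  have hden : (∏ i ∈ Finset.Icc 1 j, ((i:ℚ)+(j:ℚ)))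
      = ∏ i ∈ Finset.Icc 1 j, (((j : ℕ):ℚ)+(i:ℚ)) := by
    apply Finset.prod_congr rfl; intro i _; push_cast; ring
  rw [hnum, hden]
  have e1 := prod_lin (2*n+j) j
  have e2 := prod_lin j j
  rw [show 2*n+j+j = 2*n+2*j from by omega] at e1
  rw [show j+j = 2*j from by omega] at e2
  unfold gq
  have hY : (∏ i ∈ Finset.Icc 1 j, (((j : ℕ):ℚ)+(i:ℚ))) ≠ 0 := by
    apply ne_of_gt
    apply Finset.prod_pos
    intro i hi
    have h1 : 1 ≤ i := (Finset.mem_Icc.mp hi).1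
    have : (1:ℚ) ≤ (i:ℚ) := by exact_mod_cast h1
    have : (0:ℚ) ≤ (j:ℚ) := by positivity
    linarith
  have hZ : ((Nat.factorial (2*n+j) : ℚ) * (Nat.factorial (2*j) : ℚ)) ≠ 0 := by
    have z1 := factq_pos (2*n+j); have z2 := factq_pos (2*j); positivity
  rw [div_eq_div_iff hY hZ, ← e1, ← e2]
  ring

lemma prod_form (M n : ℕ) :
    (∏ i ∈ Finset.Icc 1 M, ∏ j ∈ Finset.Icc i M, ((2*(n:ℚ)+(i:ℚ)+(j:ℚ))/((i:ℚ)+(j:ℚ))))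
      = Fq M n := by
  rw [Finset.prod_comm' (t' := Finset.Icc 1 M) (s' := fun j => Finset.Icc 1 j) ?h]
  · unfold Fq
    apply Finset.prod_congr rfl
    intro j _
    exact inner_prod j n
  · intro x y
    simp only [Finset.mem_Icc]
    omega

section DJ
open Matrix
variable {K : Type*} [Field K]

lemma det_updateColumn_single {n : ℕ} (A : Matrix (Fin (n+1)) (Fin (n+1)) K) (j k : Fin (n+1)) :
    (A.updateCol j (Pi.single k 1)).det = A.adjugate j k := by
  have h1 : (A.updateCol j (Pi.single k 1)).det
      = ((A.updateCol j (Pi.single k 1))ᵀ).det := (Matrix.det_transpose _).symm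
  rw [h1, ← Matrix.updateRow_transpose, ← Matrix.adjugate_apply, ← Matrix.adjugate_transpose,
    Matrix.transpose_apply]

theorem dj_aux {n : ℕ} (M : Matrix (Fin (n+2)) (Fin (n+2)) K) (hM : M.det ≠ 0) :
    M.det * (M.submatrix (Fin.succ ∘ Fin.castSucc) (Fin.succ ∘ Fin.castSucc)).det =
      (M.submatrix Fin.succ Fin.succ).det * (M.submatrix Fin.castSucc Fin.castSucc).det -
      (M.submatrix Fin.castSucc Fin.succ).det * (M.submatrix Fin.succ Fin.castSucc).det := by
  classical
  set lst : Fin (n+2) := Fin.last (n+1) with hlst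
  have h0l : (0 : Fin (n+2)) ≠ lst := by simp [hlst, Fin.ext_iff]
  have h10 : (1 : Fin 2) ≠ 0 := by decide
  set a : Fin (n+2) → K := fun i => M.adjugate i 0 with ha
  set b : Fin (n+2) → K := fun i => M.adjugate i lst with hb
  set U : Matrix (Fin (n+2)) (Fin 2) K :=
    Matrix.of fun i t => if t = 0 then a i - (1 : Matrix (Fin (n+2)) (Fin (n+2)) K) i 0
      else b i - (1 : Matrix (Fin (n+2)) (Fin (n+2)) K) i lst with hU
  set V : Matrix (Fin 2) (Fin (n+2)) K :=
    Matrix.of fun t j => if t = 0 then (if j = 0 then (1:K) else 0)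
      else (if j = lst then 1 else 0) with hV
  -- determinant of 1 + U*V
  have hdetX : (1 + U * V).det = a 0 * b lst - b 0 * a lst := by
    rw [Matrix.det_one_add_mul_comm]
    have hVU : ∀ s t, (V * U) s t = if s = 0 then U 0 t else U lst t := by
      intro s t
      rw [Matrix.mul_apply]
      by_cases hs : s = 0
      · subst hs
        rw [if_pos rfl]
        rw [Finset.sum_eq_single 0]
        · simp [hV]
        · intro c _ hc; simp [hV, hc]
        · simp
      · rw [if_neg hs]
        rw [Finset.sum_eq_single lst]
        · simp [hV, hs]
        · intro c _ hc; simp [hV, hs, hc]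
        · simp
    rw [Matrix.det_fin_two]
    simp only [Matrix.add_apply, hVU]
    norm_num
    have e1 : U 0 0 = a 0 - 1 := by simp [hU, Matrix.one_apply]
    have e2 : U lst 1 = b lst - 1 := by simp [hU, h10, Matrix.one_apply]
    have e3 : U 0 1 = b 0 := by simp [hU, h10, Matrix.one_apply, h0l]
    have e4 : U lst 0 = a lst := by simp [hU, Matrix.one_apply, Ne.symm h0l]
    rw [e1, e2, e3, e4]
    ring
  -- M * (1 + U*V) is M with two columns replaced
  have hMX : M * (1 + U * V) =
      (M.updateCol lst (M.det • (Pi.single lst 1 : Fin (n+2) → K))).updateCol 0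
        (M.det • (Pi.single 0 1 : Fin (n+2) → K)) := by
    have hMU : ∀ i t, (M * U) i t =
        if t = 0 then M.det * (1 : Matrix (Fin (n+2)) (Fin (n+2)) K) i 0 - M i 0
        else M.det * (1 : Matrix (Fin (n+2)) (Fin (n+2)) K) i lst - M i lst := by
      intro i t
      rw [Matrix.mul_apply]
      by_cases ht : t = 0
      · subst ht
        rw [if_pos rfl]
        have e : ∀ k, M i k * U k 0
            = M i k * a k - M i k * (1 : Matrix (Fin (n+2)) (Fin (n+2)) K) k 0 := by
          intro k; simp [hU]; ring
        simp only [e, Finset.sum_sub_distrib]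
        have hadj : ∑ k, M i k * a k = (M * M.adjugate) i 0 := by
          rw [Matrix.mul_apply]
        have hone : ∑ k, M i k * (1 : Matrix (Fin (n+2)) (Fin (n+2)) K) k 0
            = (M * (1 : Matrix (Fin (n+2)) (Fin (n+2)) K)) i 0 := by rw [Matrix.mul_apply]
        rw [hadj, hone, Matrix.mul_adjugate, Matrix.mul_one]
        simp
      · rw [if_neg ht]
        have e : ∀ k, M i k * U k t
            = M i k * b k - M i k * (1 : Matrix (Fin (n+2)) (Fin (n+2)) K) k lst := by
          intro k; simp [hU, ht]; ring
        simp only [e, Finset.sum_sub_distrib]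
        have hadj : ∑ k, M i k * b k = (M * M.adjugate) i lst := by
          rw [Matrix.mul_apply]
        have hone : ∑ k, M i k * (1 : Matrix (Fin (n+2)) (Fin (n+2)) K) k lst
            = (M * (1 : Matrix (Fin (n+2)) (Fin (n+2)) K)) i lst := by rw [Matrix.mul_apply]
        rw [hadj, hone, Matrix.mul_adjugate, Matrix.mul_one]
        simp
    ext i j
    rw [Matrix.mul_add, Matrix.mul_one, Matrix.add_apply, ← Matrix.mul_assoc, Matrix.mul_apply,
      Fin.sum_univ_two]
    rw [hMU i 0, hMU i 1, if_pos rfl, if_neg h10]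
    simp only [Matrix.updateCol_apply, Pi.single_apply, Matrix.one_apply, hV,
      Matrix.of_apply, Pi.smul_apply, smul_eq_mul]
    by_cases hj0 : j = 0
    · subst hj0
      simp [Ne.symm h0l, eq_comm]
    · by_cases hjl : j = lst
      · subst hjl
        simp [h0l, Ne.symm h0l, hj0, eq_comm]
      · simp [hj0, hjl]
  -- compute det of the column-replaced matrix
  have hsub : (M.updateCol lst (M.det • (Pi.single lst 1 : Fin (n+2) → K))).submatrix
        Fin.succ Fin.succ
      = (M.submatrix Fin.succ Fin.succ).updateCol (Fin.last n)
          (M.det • (Pi.single (Fin.last n) 1 : Fin (n+1) → K)) := by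
    ext i j
    simp only [Matrix.submatrix_apply, Matrix.updateCol_apply, Pi.single_apply,
      Pi.smul_apply, smul_eq_mul]
    have hcj : (Fin.succ j = lst) = (j = Fin.last n) := propext (by
      rw [hlst]; exact Fin.succ_eq_last_succ)
    have hci : (Fin.succ i = lst) = (i = Fin.last n) := propext (by
      rw [hlst]; exact Fin.succ_eq_last_succ)
    simp only [hcj, hci]
  have hdetN : (M * (1 + U * V)).det
      = M.det * (M.det * (M.submatrix (Fin.succ ∘ Fin.castSucc) (Fin.succ ∘ Fin.castSucc)).det) := by
    rw [hMX, Matrix.det_updateCol_smul]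
    rw [det_updateColumn_single]
    rw [Matrix.adjugate_fin_succ_eq_det_submatrix]
    simp only [Fin.val_zero, Nat.add_zero, pow_zero, one_mul, Fin.succAbove_zero]
    rw [hsub]
    rw [Matrix.det_updateCol_smul]
    rw [det_updateColumn_single]
    rw [Matrix.adjugate_fin_succ_eq_det_submatrix]
    rw [Fin.succAbove_last, Matrix.submatrix_submatrix]
    have : (-1 : K) ^ ((Fin.last n : ℕ) + (Fin.last n : ℕ)) = 1 := by
      rw [Fin.val_last]
      exact Even.neg_one_pow ⟨n, rfl⟩
    rw [this, one_mul]
  -- combine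
  have hcomb : M.det * (a 0 * b lst - b 0 * a lst)
      = M.det * (M.det * (M.submatrix (Fin.succ ∘ Fin.castSucc) (Fin.succ ∘ Fin.castSucc)).det) := by
    rw [← hdetX, ← Matrix.det_mul, hdetN]
  have hfin := mul_left_cancel₀ hM hcomb
  rw [← hfin]
  -- now rewrite a 0, b lst, b 0, a lst as minors
  have ea : a 0 = (M.submatrix Fin.succ Fin.succ).det := by
    show M.adjugate 0 0 = _
    rw [Matrix.adjugate_fin_succ_eq_det_submatrix]
    simp [Fin.succAbove_zero]
  have eb : b lst = (M.submatrix Fin.castSucc Fin.castSucc).det := by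
    show M.adjugate lst lst = _
    rw [Matrix.adjugate_fin_succ_eq_det_submatrix, hlst, Fin.succAbove_last]
    have : (-1 : K) ^ ((Fin.last (n+1) : ℕ) + (Fin.last (n+1) : ℕ)) = 1 := by
      rw [Fin.val_last]
      exact Even.neg_one_pow ⟨n+1, rfl⟩
    rw [this, one_mul]
  have eb0 : b 0 = (-1 : K) ^ (n+1) * (M.submatrix Fin.castSucc Fin.succ).det := by
    show M.adjugate 0 lst = _
    rw [Matrix.adjugate_fin_succ_eq_det_submatrix, hlst, Fin.succAbove_last]
    simp [Fin.val_last, Fin.succAbove_zero]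
  have eal : a lst = (-1 : K) ^ (n+1) * (M.submatrix Fin.succ Fin.castSucc).det := by
    show M.adjugate lst 0 = _
    rw [Matrix.adjugate_fin_succ_eq_det_submatrix, hlst, Fin.succAbove_last]
    simp [Fin.val_last, Fin.succAbove_zero]
  rw [ea, eb, eb0, eal]
  have hsq : ((-1 : K) ^ (n+1)) * ((-1 : K) ^ (n+1)) = 1 := by
    rw [← pow_add]
    exact Even.neg_one_pow ⟨n+1, rfl⟩
  ring_nf
  rw [show ((-1 : K) ^ (n*2)) = 1 from by rw [mul_comm n 2, pow_mul, neg_one_sq, one_pow]]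
  ring

end DJ

open Polynomial in
theorem dj_poly {n : ℕ} (P : Matrix (Fin (n+2)) (Fin (n+2)) (Polynomial ℚ)) (hP : P.det ≠ 0) :
    P.det * (P.submatrix (Fin.succ ∘ Fin.castSucc) (Fin.succ ∘ Fin.castSucc)).det =
      (P.submatrix Fin.succ Fin.succ).det * (P.submatrix Fin.castSucc Fin.castSucc).det -
      (P.submatrix Fin.castSucc Fin.succ).det * (P.submatrix Fin.succ Fin.castSucc).det := by
  set φ : Polynomial ℚ →+* RatFunc ℚ := (algebraMap (Polynomial ℚ) (RatFunc ℚ)) with hφ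
  have hinj : Function.Injective φ := IsFractionRing.injective (Polynomial ℚ) (RatFunc ℚ)
  apply hinj
  have hdet : ∀ (k : ℕ) (Q : Matrix (Fin k) (Fin k) (Polynomial ℚ)),
      (Q.map φ).det = φ Q.det := by
    intro k Q
    rw [RingHom.map_det, RingHom.mapMatrix_apply]
  have hN : (P.map ⇑φ).det ≠ 0 := by
    rw [hdet]
    intro h
    exact hP (hinj (by rw [h, map_zero]))
  have h2 := dj_aux (P.map ⇑φ) hN
  simp only [Matrix.submatrix_map, hdet] at h2
  rw [_root_.map_mul, _root_.map_sub, _root_.map_mul, _root_.map_mul]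
  exact h2

open Polynomial in
theorem dj_rat {n : ℕ} (M : Matrix (Fin (n+2)) (Fin (n+2)) ℚ) :
    M.det * (M.submatrix (Fin.succ ∘ Fin.castSucc) (Fin.succ ∘ Fin.castSucc)).det =
      (M.submatrix Fin.succ Fin.succ).det * (M.submatrix Fin.castSucc Fin.castSucc).det -
      (M.submatrix Fin.castSucc Fin.succ).det * (M.submatrix Fin.succ Fin.castSucc).det := by
  set P : Matrix (Fin (n+2)) (Fin (n+2)) (Polynomial ℚ) := Matrix.charmatrix (-M) with hPdef
  have hP : P.det ≠ 0 := by
    have : P.det = (-M).charpoly := rfl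
    rw [this]
    exact (Matrix.charpoly_monic (-M)).ne_zero
  have hmap : P.map (Polynomial.evalRingHom (0:ℚ)) = M := by
    ext i j
    by_cases hij : i = j
    · subst hij
      simp [hPdef, Matrix.charmatrix_apply_eq]
    · simp [hPdef, Matrix.charmatrix_apply_ne _ _ _ hij]
  have h3 := congrArg (Polynomial.evalRingHom (0:ℚ)) (dj_poly P hP)
  simp only [_root_.map_mul, _root_.map_sub, RingHom.map_det, RingHom.mapMatrix_apply,
    ← Matrix.submatrix_map, hmap] at h3
  exact h3



noncomputable def Hmat (m n : ℕ) : Matrix (Fin n) (Fin n) ℚ :=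
  Matrix.of fun i j : Fin n => (catalan (m + (i : ℕ) + (j : ℕ)) : ℚ)

lemma Hmat_ss (m n : ℕ) :
    (Hmat m (n+2)).submatrix Fin.succ Fin.succ = Hmat (m+2) (n+1) := by
  ext i j
  simp only [Hmat, Matrix.submatrix_apply, Matrix.of_apply, Fin.val_succ]
  congr 2
  omega

lemma Hmat_cc (m n : ℕ) :
    (Hmat m (n+2)).submatrix Fin.castSucc Fin.castSucc = Hmat m (n+1) := by
  ext i j
  simp only [Hmat, Matrix.submatrix_apply, Matrix.of_apply, Fin.coe_castSucc]

lemma Hmat_cs (m n : ℕ) :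
    (Hmat m (n+2)).submatrix Fin.castSucc Fin.succ = Hmat (m+1) (n+1) := by
  ext i j
  simp only [Hmat, Matrix.submatrix_apply, Matrix.of_apply, Fin.coe_castSucc, Fin.val_succ]
  congr 2
  omega

lemma Hmat_sc (m n : ℕ) :
    (Hmat m (n+2)).submatrix Fin.succ Fin.castSucc = Hmat (m+1) (n+1) := by
  ext i j
  simp only [Hmat, Matrix.submatrix_apply, Matrix.of_apply, Fin.coe_castSucc, Fin.val_succ]
  congr 2
  omega

lemma Hmat_int (m n : ℕ) :
    (Hmat m (n+2)).submatrix (Fin.succ ∘ Fin.castSucc) (Fin.succ ∘ Fin.castSucc)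
      = Hmat (m+2) n := by
  ext i j
  simp only [Hmat, Matrix.submatrix_apply, Matrix.of_apply, Function.comp_apply,
    Fin.coe_castSucc, Fin.val_succ]
  congr 2
  omega

lemma gq_zero (j : ℕ) : gq j 0 = 1 := by
  unfold gq
  rw [show 2*0+2*j = 2*j from by omega, show 2*0+j = j from by omega, mul_comm]
  exact div_self (by positivity)

lemma fq_pos (m n : ℕ) : 0 < fq m n := Fq_pos _ _

lemma main_det (n : ℕ) : ∀ m, (Hmat m n).det = fq m n := by
  induction n using Nat.strong_induction_on with
  | _ n IH =>
    intro m
    match n with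
    | 0 =>
      rw [Matrix.det_fin_zero]
      unfold fq Fq
      rw [Finset.prod_eq_one]
      intro j _
      exact gq_zero j
    | 1 =>
      rw [Matrix.det_fin_one]
      have : Hmat m 1 0 0 = (catalan m : ℚ) := by
        simp [Hmat]
      rw [this, cat_fq]
    | (k+2) =>
      have dj := dj_rat (Hmat m (k+2))
      rw [Hmat_ss, Hmat_cc, Hmat_cs, Hmat_sc, Hmat_int] at dj
      rw [IH (k+1) (by omega) (m+2), IH (k+1) (by omega) m, IH (k+1) (by omega) (m+1),
        IH k (by omega) (m+2)] at dj
      have hnz : fq (m+2) k ≠ 0 := ne_of_gt (fq_pos _ _)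
      have hkey := KEY m k
      apply mul_right_cancel₀ hnz
      linear_combination dj - hkey

theorem stmt12 (m n : ℕ) :
    Matrix.det (Matrix.of fun i j : Fin n => (catalan (m + (i : ℕ) + (j : ℕ)) : ℚ)) =
      ∏ i ∈ Finset.Icc 1 (m - 1), ∏ j ∈ Finset.Icc i (m - 1),
        (2 * (n : ℚ) + (i : ℚ) + (j : ℚ)) / ((i : ℚ) + (j : ℚ)) := by
  have h := main_det n m
  rw [show (Matrix.of fun i j : Fin n => (catalan (m + (i : ℕ) + (j : ℕ)) : ℚ)) = Hmat m n from rfl]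
  rw [h]
  have hp := prod_form (m-1) n
  rw [show fq m n = Fq (m-1) n from rfl, ← hp]
end
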